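/- arXiv:1110.3570 — 2 statements merged into one kernel-verified Lean document; each statement's English description precedes it below -/
import Mathlib

section
/- On the group 𝐏, the measure dm_l(x,t,ρ,u,v) = ρ^{−6} dx dt dρ du dv is invariant under all left translations of 𝐏, and the measure dm_r(x,t,ρ,u,v) = ρ^{−1} dx dt dρ du dv is invariant under all right translations of 𝐏; since these measures are not proportional, 𝐏 is non-unimodular. -/
noncomputable section

open MeasureTheory Quaternion Complex RealInnerProductSpace

/- Measure-theoretic instances for the quaternions. -/
noncomputable instance : MeasurableSpace ℍ[ℝ] := borel _
instance : BorelSpace ℍ[ℝ] := ⟨rfl⟩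

/-- The purely imaginary quaternions `Im ℍ ≅ ℝ³`. -/
def ImH : Submodule ℝ ℍ[ℝ] where
  carrier := {q | q.re = 0}
  add_mem' := by intro a b ha hb; simp_all [Set.mem_setOf_eq]
  zero_mem' := by simp
  smul_mem' := by intro c q hq; simp_all [Set.mem_setOf_eq]

noncomputable instance : MeasurableSpace ↥ImH := borel _
instance : BorelSpace ↥ImH := ⟨rfl⟩

/-- the imaginary part of a quaternion, as an element of `Im ℍ`. -/
def imPart (q : ℍ[ℝ]) : ↥ImH := ⟨q.im, by show q.im.re = 0; simp⟩

/-- The quaternion Heisenberg group `𝒬 = ℍ × Im ℍ` (as a set/measure space). -/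
abbrev QH := ℍ[ℝ] × ↥ImH

/-- Group law of `𝒬` : `(x,t)(x′,t′) = (x + x′, t + t′ − 2 Im( x̄′ x ))`. -/
def Qmul (p q : QH) : QH :=
  (p.1 + q.1, p.2 + q.2 - (2 : ℝ) • imPart (star q.1 * p.1))

/-- Inverse in `𝒬`. -/
def Qinv (p : QH) : QH := (-p.1, -p.2)

lemma sandwich_re (v t : ℍ[ℝ]) (ht : t.re = 0) : (v * t * star v).re = 0 := by
  simp [Quaternion.re_mul, Quaternion.imI_mul, Quaternion.imJ_mul, Quaternion.imK_mul,
    Quaternion.re_star, Quaternion.imI_star, Quaternion.imJ_star, Quaternion.imK_star, ht]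
  ring

/-- `t ↦ v t v̄` as a map of `Im ℍ`. -/
def sandwich (v : ℍ[ℝ]) (t : ↥ImH) : ↥ImH := ⟨v * (t : ℍ[ℝ]) * star v, sandwich_re v t t.2⟩

/-- `Sp(1)`, the unit quaternions. -/
abbrev Sp1 : Type := Metric.sphere (0 : ℍ[ℝ]) 1

lemma Sp1.norm_eq (u : Sp1) : ‖(u : ℍ[ℝ])‖ = 1 := mem_sphere_zero_iff_norm.mp u.2

def sp1Mul (u v : Sp1) : Sp1 :=
  ⟨(u : ℍ[ℝ]) * (v : ℍ[ℝ]), by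
    simp [mem_sphere_zero_iff_norm, norm_mul, Sp1.norm_eq u, Sp1.norm_eq v]⟩

def sp1One : Sp1 := ⟨1, by simp [mem_sphere_zero_iff_norm]⟩

/-- The (two-fold cover of the) affine automorphism group `𝐏` of `𝒬`. -/
abbrev P := ℍ[ℝ] × ↥ImH × {r : ℝ // 0 < r} × Sp1 × Sp1

/-- Group law of `𝐏`. -/
def Pmul (g h : P) : P :=
  ⟨g.1 + Real.sqrt (g.2.2.1 : ℝ) • ((g.2.2.2.1 : ℍ[ℝ]) * h.1 * star (g.2.2.2.2 : ℍ[ℝ])),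
   g.2.1 + (g.2.2.1 : ℝ) • sandwich (g.2.2.2.2 : ℍ[ℝ]) h.2.1
     - (2 * Real.sqrt (g.2.2.1 : ℝ)) •
        imPart ((g.2.2.2.2 : ℍ[ℝ]) * star h.1 * star (g.2.2.2.1 : ℍ[ℝ]) * g.1),
   ⟨(g.2.2.1 : ℝ) * (h.2.2.1 : ℝ), mul_pos g.2.2.1.2 h.2.2.1.2⟩,
   sp1Mul g.2.2.2.1 h.2.2.2.1, sp1Mul g.2.2.2.2 h.2.2.2.2⟩

/-- The identity of `𝐏`. -/
def Pone : P := ⟨0, 0, ⟨1, one_pos⟩, sp1One, sp1One⟩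

/-- The action of `𝐏` on `𝒬`. -/
def Pact (g : P) (p : QH) : QH :=
  ⟨g.1 + Real.sqrt (g.2.2.1 : ℝ) • ((g.2.2.2.1 : ℍ[ℝ]) * p.1 * star (g.2.2.2.2 : ℍ[ℝ])),
   g.2.1 + (g.2.2.1 : ℝ) • sandwich (g.2.2.2.2 : ℍ[ℝ]) p.2
     - (2 * Real.sqrt (g.2.2.1 : ℝ)) •
        imPart ((g.2.2.2.2 : ℍ[ℝ]) * star p.1 * star (g.2.2.2.1 : ℍ[ℝ]) * g.1)⟩

/-- The unitary representation `U` of `𝐏` on `L²(𝒬)`. -/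
def Uop (g : P) (f : QH → ℂ) : QH → ℂ := fun z =>
  (((g.2.2.1 : ℝ) ^ (-(5 : ℝ)/2) : ℝ) : ℂ) *
    f ((Real.sqrt (g.2.2.1 : ℝ))⁻¹ •
          (star (g.2.2.2.1 : ℍ[ℝ]) * (z.1 - g.1) * (g.2.2.2.2 : ℍ[ℝ])),
       ((g.2.2.1 : ℝ))⁻¹ •
          sandwich (star (g.2.2.2.2 : ℍ[ℝ]))
            (z.2 - g.2.1 + (2 : ℝ) • imPart (star z.1 * g.1)))

/-- The continuous wavelet transform `W_φ f (g) = ⟨f, U(g)φ⟩_{L²(𝒬)}`. -/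
def Wav (φ f : QH → ℂ) (g : P) : ℂ :=
  ∫ z : QH, f z * (starRingEnd ℂ) (Uop g φ z)

/-- Group convolution on `𝒬`. -/
def Qconv (f g : QH → ℂ) : QH → ℂ := fun z =>
  ∫ w : QH, f w * g (Qmul (Qinv w) z)

/-- dilation `φ_ρ(x,t) = ρ^{−5} φ(x/√ρ, t/ρ)`. -/
def dilateF (ρ : ℝ) (φ : QH → ℂ) : QH → ℂ := fun z =>
  ((ρ ^ (-5 : ℤ) : ℝ) : ℂ) * φ ((Real.sqrt ρ)⁻¹ • z.1, ρ⁻¹ • z.2)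

/-- rotation `φ_{u,v}(x,t) = φ(ū x v, v̄ t v)`. -/
def rotF (u v : Sp1) (φ : QH → ℂ) : QH → ℂ := fun z =>
  φ (star (u : ℍ[ℝ]) * z.1 * (v : ℍ[ℝ]), sandwich (star (v : ℍ[ℝ])) z.2)

/-- `φ̃(x,t) = conj (φ(−x,−t))`. -/
def tildeF (φ : QH → ℂ) : QH → ℂ := fun z => (starRingEnd ℂ) (φ (-z.1, -z.2))

/-- The Radon transform `ℛf(x,t) = ∫_ℍ f(y, t − 2 Im(ȳ x)) dy`. -/
def Radon (f : QH → ℂ) : QH → ℂ := fun z =>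
  ∫ y : ℍ[ℝ], f (y, z.2 - (2 : ℝ) • imPart (star y * z.1))

/-- Partial Fourier transform in the central variable. -/
def F2 (f : QH → ℂ) : QH → ℂ := fun p =>
  ∫ t : ↥ImH, f (p.1, t) * Complex.exp (Complex.I * ((⟪t, p.2⟫ : ℝ) : ℂ))

/-- Full (Euclidean) Fourier transform on `𝒬 ≅ ℝ⁴ × ℝ³`. -/
def FF (f : QH → ℂ) : QH → ℂ := fun p =>
  ∫ z : QH, f z * Complex.exp (Complex.I * ((⟪z.1, p.1⟫ : ℝ) : ℂ)) *
    Complex.exp (Complex.I * ((⟪z.2, p.2⟫ : ℝ) : ℂ))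

/-- Inverse of the partial Fourier transform `ℱ₂`. -/
def F2inv (f : QH → ℂ) : QH → ℂ := fun z =>
  (((2 * Real.pi) ^ (-3 : ℤ) : ℝ) : ℂ) *
    ∫ a : ↥ImH, f (z.1, a) * Complex.exp (-Complex.I * ((⟪z.2, a⟫ : ℝ) : ℂ))

/-- Inverse of the full Fourier transform `ℱ`. -/
def FFinv (f : QH → ℂ) : QH → ℂ := fun z =>
  (((2 * Real.pi) ^ (-7 : ℤ) : ℝ) : ℂ) *
    ∫ p : QH, f p * Complex.exp (-Complex.I * ((⟪z.1, p.1⟫ : ℝ) : ℂ)) *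
      Complex.exp (-Complex.I * ((⟪z.2, p.2⟫ : ℝ) : ℂ))

/-- The mixing map `Ψ(f)(x,t) = f(−2 x t, t)`. -/
def Psi (f : QH → ℂ) : QH → ℂ := fun z =>
  f ((-2 : ℝ) • (z.1 * (z.2 : ℍ[ℝ])), z.2)

open Classical in
/-- The inverse mixing map. -/
def PsiInv (f : QH → ℂ) : QH → ℂ := fun z =>
  if z.2 = 0 then 0 else
    f ((2 * ‖(z.2 : ℍ[ℝ])‖ ^ 2)⁻¹ • (z.1 * (z.2 : ℍ[ℝ])), z.2)

/-- A function is a Schwartz function. -/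
def IsSchwartz (f : QH → ℂ) : Prop := ∃ g : SchwartzMap QH ℂ, ⇑g = f

/-- The Semyanistyi–Lizorkin space `𝒮^*(𝒬)`: Schwartz functions all of whose
derivatives in the central variable vanish at `t = 0`. -/
def SstarUpper : Set (QH → ℂ) :=
  {f | IsSchwartz f ∧
    ∀ (x : ℍ[ℝ]) (n : ℕ), iteratedFDeriv ℝ n (fun t : ↥ImH => f (x, t)) 0 = 0}

/-- The Semyanistyi–Lizorkin space `𝒮_*(𝒬)`: Schwartz functions all of whose
moments in the central variable vanish. -/
def SstarLower : Set (QH → ℂ) :=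
  {f | IsSchwartz f ∧
    ∀ (x : ℍ[ℝ]) (s : ℕ × ℕ × ℕ),
      ∫ t : ↥ImH, f (x, t) *
        ((((t : ℍ[ℝ]).imI ^ s.1 * (t : ℍ[ℝ]).imJ ^ s.2.1 * (t : ℍ[ℝ]).imK ^ s.2.2 : ℝ)) : ℂ) = 0}

/-- basis vectors of `Im ℍ` -/
def eI : ↥ImH := ⟨⟨0,1,0,0⟩, rfl⟩
def eJ : ↥ImH := ⟨⟨0,0,1,0⟩, rfl⟩
def eK : ↥ImH := ⟨⟨0,0,0,1⟩, rfl⟩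

/-- partial derivative in the central variable along `v ∈ Im ℍ`. -/
def Dt (v : ↥ImH) (f : QH → ℂ) : QH → ℂ := fun z => fderiv ℝ f z (0, v)

/-- `𝓛 = −(1/π²)(∂²/∂t₁² + ∂²/∂t₂² + ∂²/∂t₃²)` acting in the central variable. -/
def Lop (f : QH → ℂ) : QH → ℂ := fun z =>
  -(((Real.pi ^ 2)⁻¹ : ℝ) : ℂ) * (Dt eI (Dt eI f) z + Dt eJ (Dt eJ f) z + Dt eK (Dt eK f) z)


/-- the normalized (uniform) Haar measure `du` on `Sp(1)`, i.e. the normalized surface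
measure on the unit sphere of `ℍ`. -/
def sphereMeasure : Measure Sp1 :=
  (((volume : Measure ℍ[ℝ]).toSphere) Set.univ)⁻¹ • (volume : Measure ℍ[ℝ]).toSphere

/-- the measure `ρⁿ dρ` on `(0,∞)`. -/
def rhoMeasure (n : ℤ) : Measure {r : ℝ // 0 < r} :=
  ((volume : Measure ℝ).comap Subtype.val).withDensity fun r => ENNReal.ofReal ((r : ℝ) ^ n)

/-- the left Haar measure `dm_l = ρ^{−6} dx dt dρ du dv` on `𝐏`. -/
def ml : Measure P :=
  (volume : Measure ℍ[ℝ]).prod ((volume : Measure ↥ImH).prod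
    ((rhoMeasure (-6)).prod (sphereMeasure.prod sphereMeasure)))

/-- the right Haar measure `dm_r = ρ^{−1} dx dt dρ du dv` on `𝐏`. -/
def mr : Measure P :=
  (volume : Measure ℍ[ℝ]).prod ((volume : Measure ↥ImH).prod
    ((rhoMeasure (-1)).prod (sphereMeasure.prod sphereMeasure)))


/-! ### Auxiliary material for the proof -/

noncomputable instance : BorelSpace {r : ℝ // 0 < r} :=
  inferInstanceAs (BorelSpace {r : ℝ | 0 < r})

set_option maxHeartbeats 1000000
set_option synthInstance.maxHeartbeats 400000

namespace Statement3Aux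

open Metric Set Filter Pointwise
open scoped ENNReal

local notation "ℝ₊" => {r : ℝ // 0 < r}

abbrev W : Type := ℝ₊ × Sp1 × Sp1

lemma star_mul_self' (u : Sp1) : star (u : ℍ[ℝ]) * (u : ℍ[ℝ]) = 1 := by
  rw [Quaternion.star_mul_self, Quaternion.normSq_eq_norm_mul_self, Sp1.norm_eq, one_mul]
  exact Quaternion.coe_one

lemma self_mul_star' (u : Sp1) : (u : ℍ[ℝ]) * star (u : ℍ[ℝ]) = 1 := by
  rw [Quaternion.self_mul_star, Quaternion.normSq_eq_norm_mul_self, Sp1.norm_eq, one_mul]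
  exact Quaternion.coe_one

/-- the rotation `x ↦ u x v̄` as a linear isometry equivalence of `ℍ`. -/
noncomputable def qrot (u v : Sp1) : ℍ[ℝ] ≃ₗᵢ[ℝ] ℍ[ℝ] where
  toLinearEquiv :=
  { toFun := fun x => (u : ℍ[ℝ]) * x * star (v : ℍ[ℝ])
    invFun := fun y => star (u : ℍ[ℝ]) * y * (v : ℍ[ℝ])
    map_add' := fun a b => by noncomm_ring
    map_smul' := fun c a => by
      simp [Algebra.mul_smul_comm, Algebra.smul_mul_assoc]
    left_inv := fun x => by
      show star (u : ℍ[ℝ]) * ((u : ℍ[ℝ]) * x * star (v : ℍ[ℝ])) * (v : ℍ[ℝ]) = x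
      have h : star (u : ℍ[ℝ]) * ((u : ℍ[ℝ]) * x * star (v : ℍ[ℝ])) * (v : ℍ[ℝ])
          = (star (u : ℍ[ℝ]) * (u : ℍ[ℝ])) * x * (star (v : ℍ[ℝ]) * (v : ℍ[ℝ])) := by
        noncomm_ring
      rw [h, star_mul_self', star_mul_self', one_mul, mul_one]
    right_inv := fun y => by
      show (u : ℍ[ℝ]) * (star (u : ℍ[ℝ]) * y * (v : ℍ[ℝ])) * star (v : ℍ[ℝ]) = y
      have h : (u : ℍ[ℝ]) * (star (u : ℍ[ℝ]) * y * (v : ℍ[ℝ])) * star (v : ℍ[ℝ])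
          = ((u : ℍ[ℝ]) * star (u : ℍ[ℝ])) * y * ((v : ℍ[ℝ]) * star (v : ℍ[ℝ])) := by
        noncomm_ring
      rw [h, self_mul_star', self_mul_star', one_mul, mul_one] }
  norm_map' := fun x => by
    simp [norm_mul, Quaternion.norm_star, Sp1.norm_eq]

@[simp] lemma qrot_apply (u v : Sp1) (x : ℍ[ℝ]) :
    qrot u v x = (u : ℍ[ℝ]) * x * star (v : ℍ[ℝ]) := rfl

/-- the conjugation `t ↦ v t v̄` as a linear isometry equivalence of `Im ℍ`. -/
noncomputable def sandIso (v : Sp1) : ↥ImH ≃ₗᵢ[ℝ] ↥ImH where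
  toLinearEquiv :=
  { toFun := sandwich (v : ℍ[ℝ])
    invFun := sandwich (star (v : ℍ[ℝ]))
    map_add' := fun a b => Subtype.ext <| by
      show (v : ℍ[ℝ]) * ((a : ℍ[ℝ]) + (b : ℍ[ℝ])) * star (v : ℍ[ℝ]) = _
      simp [sandwich, mul_add, add_mul]
    map_smul' := fun c a => Subtype.ext <| by
      show (v : ℍ[ℝ]) * (c • (a : ℍ[ℝ])) * star (v : ℍ[ℝ]) = _
      simp [sandwich, Algebra.mul_smul_comm, Algebra.smul_mul_assoc]
    left_inv := fun t => Subtype.ext <| by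
      show star (v : ℍ[ℝ]) * ((v : ℍ[ℝ]) * (t : ℍ[ℝ]) * star (v : ℍ[ℝ])) * star (star (v : ℍ[ℝ]))
          = (t : ℍ[ℝ])
      rw [star_star]
      have h : star (v : ℍ[ℝ]) * ((v : ℍ[ℝ]) * (t : ℍ[ℝ]) * star (v : ℍ[ℝ])) * (v : ℍ[ℝ])
          = (star (v : ℍ[ℝ]) * (v : ℍ[ℝ])) * (t : ℍ[ℝ]) * (star (v : ℍ[ℝ]) * (v : ℍ[ℝ])) := by
        noncomm_ring
      rw [h, star_mul_self', one_mul, mul_one]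
    right_inv := fun t => Subtype.ext <| by
      show (v : ℍ[ℝ]) * (star (v : ℍ[ℝ]) * (t : ℍ[ℝ]) * star (star (v : ℍ[ℝ]))) * star (v : ℍ[ℝ])
          = (t : ℍ[ℝ])
      rw [star_star]
      have h : (v : ℍ[ℝ]) * (star (v : ℍ[ℝ]) * (t : ℍ[ℝ]) * (v : ℍ[ℝ])) * star (v : ℍ[ℝ])
          = ((v : ℍ[ℝ]) * star (v : ℍ[ℝ])) * (t : ℍ[ℝ]) * ((v : ℍ[ℝ]) * star (v : ℍ[ℝ])) := by
        noncomm_ring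
      rw [h, self_mul_star', one_mul, mul_one] }
  norm_map' := fun t => by
    show ‖(v : ℍ[ℝ]) * (t : ℍ[ℝ]) * star (v : ℍ[ℝ])‖ = ‖(t : ℍ[ℝ])‖
    simp [norm_mul, Quaternion.norm_star, Sp1.norm_eq]

@[simp] lemma sandIso_apply (v : Sp1) (t : ↥ImH) :
    sandIso v t = sandwich (v : ℍ[ℝ]) t := rfl

lemma finrank_ImH : Module.finrank ℝ ↥ImH = 3 := by
  classical
  let f : ℍ[ℝ] →ₗ[ℝ] ℝ :=
  { toFun := fun q => q.re
    map_add' := fun a b => rfl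
    map_smul' := fun c a => rfl }
  have hker : ImH = LinearMap.ker f := by
    ext q
    show q.re = 0 ↔ _
    simp [LinearMap.mem_ker, f]
    exact Iff.rfl
  have hsurj : Function.Surjective f := fun r => ⟨((r : ℝ) : ℍ[ℝ]), rfl⟩
  have h := LinearMap.finrank_range_add_finrank_ker f
  rw [LinearMap.range_eq_top.mpr hsurj, finrank_top, Quaternion.finrank_eq_four] at h
  have : Module.finrank ℝ ℝ = 1 := Module.finrank_self ℝ
  rw [this] at h
  rw [hker]
  omega

/-- pushforward of Haar measure under `x ↦ a + c • e x`. -/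
lemma map_affine {E : Type*} [NormedAddCommGroup E] [InnerProductSpace ℝ E]
    [FiniteDimensional ℝ E] [MeasurableSpace E] [BorelSpace E]
    (e : E ≃ₗᵢ[ℝ] E) (a : E) {c : ℝ} (hc : 0 < c) :
    Measure.map (fun x => a + c • e x) (volume : Measure E)
      = ENNReal.ofReal ((c ^ Module.finrank ℝ E)⁻¹) • (volume : Measure E) := by
  have h1 : Measurable (fun y : E => a + y) := (continuous_const.add continuous_id).measurable
  have h2 : Measurable (fun y : E => c • y) := (continuous_const_smul c).measurable
  have h3 : Measurable ⇑e := e.continuous.measurable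
  calc Measure.map (fun x => a + c • e x) (volume : Measure E)
      = Measure.map ((fun y => a + y) ∘ ((fun y : E => c • y) ∘ ⇑e)) volume := rfl
    _ = Measure.map (fun y => a + y)
          (Measure.map ((fun y : E => c • y) ∘ ⇑e) volume) :=
        (Measure.map_map h1 (h2.comp h3)).symm
    _ = Measure.map (fun y => a + y)
          (Measure.map (fun y : E => c • y) (Measure.map (⇑e) volume)) := by
        rw [Measure.map_map h2 h3]
    _ = Measure.map (fun y => a + y) (Measure.map (fun y : E => c • y) volume) := by
        rw [e.measurePreserving.map_eq]
    _ = ENNReal.ofReal ((c ^ Module.finrank ℝ E)⁻¹) • volume := by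
        rw [Measure.map_addHaar_smul volume hc.ne', Measure.map_smul, map_add_left_eq_self,
          _root_.abs_of_nonneg (by positivity : (0:ℝ) ≤ (c ^ Module.finrank ℝ E)⁻¹)]

lemma smul_prod' {α β : Type*} [MeasurableSpace α] [MeasurableSpace β]
    (c : ℝ≥0∞) (μ : Measure α) (ν : Measure β) [SFinite ν] :
    (c • μ).prod ν = c • (μ.prod ν) := by
  ext s hs
  rw [Measure.prod_apply hs, Measure.smul_apply, smul_eq_mul, Measure.prod_apply hs,
    lintegral_smul_measure, smul_eq_mul]

lemma prod_smul' {α β : Type*} [MeasurableSpace α] [MeasurableSpace β]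
    (c : ℝ≥0∞) (μ : Measure α) (ν : Measure β) [SFinite ν] :
    μ.prod (c • ν) = c • (μ.prod ν) := by
  ext s hs
  rw [Measure.prod_apply hs, Measure.smul_apply, smul_eq_mul, Measure.prod_apply hs]
  simp only [Measure.smul_apply, smul_eq_mul]
  rw [lintegral_const_mul c (measurable_measure_prodMk_left hs)]

lemma hembR : MeasurableEmbedding (Subtype.val : ℝ₊ → ℝ) :=
  MeasurableEmbedding.subtype_coe measurableSet_Ioi

instance : SigmaFinite ((volume : Measure ℝ).comap (Subtype.val : ℝ₊ → ℝ)) := by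
  refine ⟨⟨{ set := fun k => {r : ℝ₊ | (r : ℝ) < k + 1}
             set_mem := fun _ => trivial
             finite := fun k => ?_
             spanning := ?_ }⟩⟩
  · rw [hembR.comap_apply]
    refine lt_of_le_of_lt (measure_mono ?_) (?_ : volume (Ioo (0:ℝ) (k+1)) < ⊤)
    · rintro x ⟨r, hr, rfl⟩
      exact ⟨r.2, hr⟩
    · rw [Real.volume_Ioo]
      exact ENNReal.ofReal_lt_top
  · ext r
    simp only [mem_iUnion, mem_setOf_eq, mem_univ, iff_true]
    obtain ⟨k, hk⟩ := exists_nat_gt (r : ℝ)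
    exact ⟨k, hk.trans (lt_add_one _)⟩

instance sfinite_rho (n : ℤ) : SFinite (rhoMeasure n) := by
  unfold rhoMeasure; infer_instance

lemma measurable_zpow_ofReal (n : ℤ) : Measurable fun x : ℝ => ENNReal.ofReal (x ^ n) := by
  refine ENNReal.measurable_ofReal.comp ?_
  rcases n with m | m
  · exact measurable_id.pow_const m
  · simpa only [zpow_negSucc, id] using (measurable_id.pow_const (m + 1)).fun_inv

lemma setLIntegral_posSubtype (t : Set ℝ₊) (f : ℝ → ℝ≥0∞) :
    ∫⁻ x in t, f ↑x ∂((volume : Measure ℝ).comap (Subtype.val : ℝ₊ → ℝ))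
      = ∫⁻ x in Subtype.val '' t, f x ∂(volume : Measure ℝ) :=
  setLIntegral_subtype (μ := (volume : Measure ℝ)) (s := {x : ℝ | 0 < x})
    measurableSet_Ioi t f

lemma rho_map (n : ℤ) {c : ℝ} (hc : 0 < c) :
    Measure.map (fun r : ℝ₊ => (⟨c * r, mul_pos hc r.2⟩ : ℝ₊)) (rhoMeasure n)
      = ENNReal.ofReal (c ^ (-(n + 1))) • rhoMeasure n := by
  have hT : Measurable (fun r : ℝ₊ => (⟨c * r, mul_pos hc r.2⟩ : ℝ₊)) :=
    (measurable_const.mul measurable_subtype_coe).subtype_mk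
  have key : ∀ A : Set ℝ, MeasurableSet A →
      ∫⁻ x in (fun x : ℝ => c * x) ⁻¹' A, ENNReal.ofReal (x ^ n) ∂volume
        = ENNReal.ofReal (c ^ (-(n + 1))) * ∫⁻ x in A, ENNReal.ofReal (x ^ n) ∂volume := by
    intro A hA
    have hf : Measurable fun y : ℝ => ENNReal.ofReal ((c⁻¹ * y) ^ n) :=
      (measurable_zpow_ofReal n).comp (measurable_const_mul c⁻¹)
    have h1 : ∫⁻ y in A, ENNReal.ofReal ((c⁻¹ * y) ^ n)
          ∂(Measure.map (fun x : ℝ => c * x) volume)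
        = ∫⁻ x in (fun x : ℝ => c * x) ⁻¹' A, ENNReal.ofReal ((c⁻¹ * (c * x)) ^ n) ∂volume :=
      setLIntegral_map hA hf (measurable_const_mul c)
    have h2 : ∫⁻ x in (fun x : ℝ => c * x) ⁻¹' A, ENNReal.ofReal ((c⁻¹ * (c * x)) ^ n) ∂volume
        = ∫⁻ x in (fun x : ℝ => c * x) ⁻¹' A, ENNReal.ofReal (x ^ n) ∂volume := by
      simp only [inv_mul_cancel_left₀ hc.ne']
    have h3 : ∫⁻ y in A, ENNReal.ofReal ((c⁻¹ * y) ^ n)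
          ∂(Measure.map (fun x : ℝ => c * x) volume)
        = ENNReal.ofReal |c⁻¹| * ∫⁻ y in A, ENNReal.ofReal ((c⁻¹ * y) ^ n) ∂volume := by
      rw [Real.map_volume_mul_left hc.ne', Measure.restrict_smul, lintegral_smul_measure, smul_eq_mul]
    have h4 : ∀ y : ℝ, ENNReal.ofReal ((c⁻¹ * y) ^ n)
        = ENNReal.ofReal ((c⁻¹) ^ n) * ENNReal.ofReal (y ^ n) := by
      intro y
      rw [mul_zpow, ENNReal.ofReal_mul (zpow_nonneg (inv_nonneg.mpr hc.le) n)]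
    have h5 : ∫⁻ y in A, ENNReal.ofReal ((c⁻¹ * y) ^ n) ∂volume
        = ENNReal.ofReal ((c⁻¹) ^ n) * ∫⁻ y in A, ENNReal.ofReal (y ^ n) ∂volume := by
      simp only [h4]
      exact lintegral_const_mul' _ _ ENNReal.ofReal_ne_top
    have hscal : ENNReal.ofReal |c⁻¹| * ENNReal.ofReal ((c⁻¹) ^ n)
        = ENNReal.ofReal (c ^ (-(n + 1))) := by
      rw [abs_of_pos (inv_pos.mpr hc), ← ENNReal.ofReal_mul (inv_nonneg.mpr hc.le)]
      congr 1
      rw [show (-(n + 1)) = (-1) + (-n) by ring, zpow_add₀ hc.ne', zpow_neg, zpow_one,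
        zpow_neg, inv_zpow]
    rw [← h2, ← h1, h3, h5, ← mul_assoc, hscal]
  ext s hs
  rw [Measure.map_apply hT hs, Measure.smul_apply, smul_eq_mul]
  rw [rhoMeasure, withDensity_apply _ (hT hs), withDensity_apply _ hs]
  rw [setLIntegral_posSubtype _ (fun a : ℝ => ENNReal.ofReal (a ^ n)),
    setLIntegral_posSubtype _ (fun a : ℝ => ENNReal.ofReal (a ^ n))]
  have him : (Subtype.val '' ((fun r : ℝ₊ => (⟨c * r, mul_pos hc r.2⟩ : ℝ₊)) ⁻¹' s))
      = (fun x : ℝ => c * x) ⁻¹' (Subtype.val '' s) := by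
    ext x
    constructor
    · rintro ⟨r, hrs, rfl⟩
      exact ⟨_, hrs, rfl⟩
    · rintro ⟨r, hrs, hrx⟩
      have hrx' : (r : ℝ) = c * x := hrx
      have h1 : (0:ℝ) < c * x := by rw [← hrx']; exact r.2
      have hx0 : (0:ℝ) < x := by
        by_contra hx
        push_neg at hx
        nlinarith
      refine ⟨⟨x, hx0⟩, ?_, rfl⟩
      show (⟨c * x, _⟩ : ℝ₊) ∈ s
      have : (⟨c * x, mul_pos hc hx0⟩ : ℝ₊) = r := Subtype.ext hrx'.symm
      rwa [this]
  rw [him, key _ (hembR.measurableSet_image' hs)]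

/-- invariance of `toSphere` under a linear isometry. -/
lemma sphere_map_toSphere (e : ℍ[ℝ] ≃ₗᵢ[ℝ] ℍ[ℝ])
    (hw : ∀ w : Sp1, (e w : ℍ[ℝ]) ∈ Metric.sphere (0 : ℍ[ℝ]) 1) :
    Measure.map (fun w : Sp1 => (⟨e w, hw w⟩ : Sp1)) (volume : Measure ℍ[ℝ]).toSphere
      = (volume : Measure ℍ[ℝ]).toSphere := by
  set S : Sp1 → Sp1 := fun w => (⟨e w, hw w⟩ : Sp1) with hS
  have hSm : Measurable S :=
    Measurable.subtype_mk (e.continuous.measurable.comp measurable_subtype_coe)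
  ext s hs
  rw [Measure.map_apply hSm hs, Measure.toSphere_apply' _ (hSm hs),
    Measure.toSphere_apply' _ hs]
  congr 1
  have him : Subtype.val '' (S ⁻¹' s) = ⇑e ⁻¹' (Subtype.val '' s) := by
    ext x
    constructor
    · rintro ⟨w, hws, rfl⟩
      exact ⟨S w, hws, rfl⟩
    · rintro ⟨w, hws, hwx⟩
      have hx : x ∈ Metric.sphere (0 : ℍ[ℝ]) 1 := by
        have h1 : ‖e x‖ = 1 := by
          rw [← hwx]; exact Sp1.norm_eq w
        rw [mem_sphere_zero_iff_norm, ← e.norm_map x, h1]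
      refine ⟨⟨x, hx⟩, ?_, rfl⟩
      show S ⟨x, hx⟩ ∈ s
      have : S ⟨x, hx⟩ = w := Subtype.ext hwx.symm
      rwa [this]
  rw [him]
  have hsm : Ioo (0:ℝ) 1 • (⇑e ⁻¹' (Subtype.val '' s))
      = ⇑e ⁻¹' (Ioo (0:ℝ) 1 • (Subtype.val '' s)) := by
    ext x
    constructor
    · rintro ⟨r, hr, y, hy, rfl⟩
      refine ⟨r, hr, e y, hy, ?_⟩
      show r • e y = e (r • y)
      rw [e.map_smul]
    · rintro ⟨r, hr, y, hy, hxy⟩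
      refine ⟨r, hr, e.symm y, by simpa using hy, ?_⟩
      apply e.injective
      show e (r • e.symm y) = e x
      rw [e.map_smul]
      simpa using hxy
  rw [hsm]
  exact e.measurePreserving.measure_preimage_emb e.toHomeomorph.measurableEmbedding _

lemma sphere_map (e : ℍ[ℝ] ≃ₗᵢ[ℝ] ℍ[ℝ])
    (hw : ∀ w : Sp1, (e w : ℍ[ℝ]) ∈ Metric.sphere (0 : ℍ[ℝ]) 1) :
    Measure.map (fun w : Sp1 => (⟨e w, hw w⟩ : Sp1)) sphereMeasure = sphereMeasure := by
  unfold sphereMeasure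
  rw [Measure.map_smul, sphere_map_toSphere e hw]

lemma mem_sp1_of_iso (e : ℍ[ℝ] ≃ₗᵢ[ℝ] ℍ[ℝ]) (w : Sp1) :
    (e w : ℍ[ℝ]) ∈ Metric.sphere (0 : ℍ[ℝ]) 1 := by
  rw [mem_sphere_zero_iff_norm, e.norm_map]
  exact Sp1.norm_eq w

lemma star_mem_sp1 (u : Sp1) : star (u : ℍ[ℝ]) ∈ Metric.sphere (0 : ℍ[ℝ]) 1 := by
  rw [mem_sphere_zero_iff_norm, Quaternion.norm_star]
  exact Sp1.norm_eq u

lemma sp1Mul_left_mp (u : Sp1) :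
    MeasurePreserving (fun w => sp1Mul u w) sphereMeasure sphereMeasure := by
  have hfun : (fun w => sp1Mul u w)
      = fun w : Sp1 => (⟨qrot u sp1One w, mem_sp1_of_iso _ w⟩ : Sp1) := by
    funext w
    exact Subtype.ext (by simp [sp1Mul, sp1One])
  constructor
  · rw [hfun]
    exact Measurable.subtype_mk
      ((qrot u sp1One).continuous.measurable.comp measurable_subtype_coe)
  · rw [hfun]
    exact sphere_map _ _

lemma sp1Mul_right_mp (u : Sp1) :
    MeasurePreserving (fun w => sp1Mul w u) sphereMeasure sphereMeasure := by
  have hfun : (fun w => sp1Mul w u)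
      = fun w : Sp1 => (⟨qrot sp1One ⟨star (u : ℍ[ℝ]), star_mem_sp1 u⟩ w,
          mem_sp1_of_iso _ w⟩ : Sp1) := by
    funext w
    exact Subtype.ext (by simp [sp1Mul, sp1One])
  constructor
  · rw [hfun]
    exact Measurable.subtype_mk
      ((qrot _ _).continuous.measurable.comp measurable_subtype_coe)
  · rw [hfun]
    exact sphere_map _ _

lemma sphereMeasure_univ : sphereMeasure Set.univ = 1 := by
  have ha : (volume : Measure ℍ[ℝ]).toSphere Set.univ
      = (Module.finrank ℝ ℍ[ℝ] : ℝ≥0∞) * volume (Metric.ball (0:ℍ[ℝ]) 1) :=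
    Measure.toSphere_apply_univ _
  have h0 : (volume : Measure ℍ[ℝ]).toSphere Set.univ ≠ 0 := by
    rw [ha]
    refine mul_ne_zero ?_ (Metric.measure_ball_pos volume 0 one_pos).ne'
    rw [Quaternion.finrank_eq_four]
    norm_num
  have ht : (volume : Measure ℍ[ℝ]).toSphere Set.univ ≠ ⊤ := by
    rw [ha]
    exact ENNReal.mul_ne_top (ENNReal.natCast_ne_top _) measure_ball_lt_top.ne
  unfold sphereMeasure
  rw [Measure.smul_apply, smul_eq_mul]
  exact ENNReal.inv_mul_cancel h0 ht

instance : IsFiniteMeasure sphereMeasure :=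
  ⟨by rw [sphereMeasure_univ]; exact ENNReal.one_lt_top⟩

instance : SFinite (volume : Measure ℍ[ℝ]) := inferInstance
instance : SFinite (volume : Measure ↥ImH) := inferInstance
instance : SFinite sphereMeasure := inferInstance

/-- the measure `Mn n = dx dt ρⁿ dρ du dv` on `P`. -/
noncomputable def Mn (n : ℤ) : Measure P :=
  (volume : Measure ℍ[ℝ]).prod ((volume : Measure ↥ImH).prod
    ((rhoMeasure n).prod (sphereMeasure.prod sphereMeasure)))

lemma continuous_imPart : Continuous imPart :=
  Continuous.subtype_mk Quaternion.continuous_im _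

lemma continuous_starH : Continuous (star : ℍ[ℝ] → ℍ[ℝ]) := by
  have h : (star : ℍ[ℝ] → ℍ[ℝ]) = fun q => ((2 * q.re : ℝ) : ℍ[ℝ]) - q := by
    funext q
    exact Quaternion.star_eq_two_re_sub q
  rw [h]
  exact (Quaternion.continuous_coe.comp (continuous_const.mul Quaternion.continuous_re)).sub
    continuous_id

lemma continuous_sandwich (v : ℍ[ℝ]) : Continuous (sandwich v) :=
  Continuous.subtype_mk
    (((continuous_const.mul continuous_subtype_val).mul continuous_const)) _

lemma pow_sqrt_four {ρ : ℝ} (hρ : 0 ≤ ρ) : Real.sqrt ρ ^ 4 = ρ ^ 2 := by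
  rw [show (4 : ℕ) = 2 * 2 from rfl, pow_mul, Real.sq_sqrt hρ]

lemma inv_pow_eq (a : ℝ) (k : ℕ) : (a ^ k)⁻¹ = a ^ (-(k : ℤ)) := by
  rw [zpow_neg, zpow_natCast]


lemma scalar_combine {ρ : ℝ} (hρ : 0 < ρ) (n : ℤ) :
    ENNReal.ofReal (ρ ^ (-(n + 1))) * ENNReal.ofReal ((ρ ^ (3:ℕ))⁻¹)
        * ENNReal.ofReal ((ρ ^ (2:ℕ))⁻¹)
      = ENNReal.ofReal (ρ ^ (-(n + 6))) := by
  rw [← ENNReal.ofReal_mul (zpow_nonneg hρ.le _), ← ENNReal.ofReal_mul (by positivity)]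
  congr 1
  rw [inv_pow_eq, inv_pow_eq, ← zpow_add₀ hρ.ne', ← zpow_add₀ hρ.ne']
  congr 1
  push_cast
  ring

lemma map_left (g : P) (n : ℤ) :
    Measure.map (fun h => Pmul g h) (Mn n)
      = ENNReal.ofReal ((g.2.2.1 : ℝ) ^ (-(n + 6))) • Mn n := by
  obtain ⟨x₀, t₀, ρ, u, v⟩ := g
  have hρ : (0 : ℝ) < ρ := ρ.2
  have hsq : (0 : ℝ) < Real.sqrt ρ := Real.sqrt_pos.mpr hρ
  -- the measure on the `(ρ, u, v)` part
  have hCmp : MeasurePreserving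
      (fun w : W => ((⟨(ρ : ℝ) * w.1, mul_pos hρ w.1.2⟩ : ℝ₊), sp1Mul u w.2.1, sp1Mul v w.2.2))
      ((rhoMeasure n).prod (sphereMeasure.prod sphereMeasure))
      (ENNReal.ofReal ((ρ : ℝ) ^ (-(n + 1))) •
        ((rhoMeasure n).prod (sphereMeasure.prod sphereMeasure))) := by
    have h1 : MeasurePreserving (fun r : ℝ₊ => (⟨(ρ : ℝ) * r, mul_pos hρ r.2⟩ : ℝ₊))
        (rhoMeasure n) (ENNReal.ofReal ((ρ : ℝ) ^ (-(n + 1))) • rhoMeasure n) :=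
      ⟨(measurable_const.mul measurable_subtype_coe).subtype_mk, rho_map n hρ⟩
    have h2 := h1.prod ((sp1Mul_left_mp u).prod (sp1Mul_left_mp v))
    exact ⟨h2.measurable, h2.map_eq.trans (smul_prod' _ _ _)⟩
  -- the `t` translation-rotation for fixed `x`
  have hBmp : ∀ x : ℍ[ℝ], MeasurePreserving
      (fun t : ↥ImH => t₀ + (ρ : ℝ) • sandwich (v : ℍ[ℝ]) t
          - (2 * Real.sqrt ρ) • imPart ((v : ℍ[ℝ]) * star x * star (u : ℍ[ℝ]) * x₀))
      (volume : Measure ↥ImH)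
      (ENNReal.ofReal (((ρ : ℝ) ^ (3:ℕ))⁻¹) • (volume : Measure ↥ImH)) := by
    intro x
    constructor
    · exact Continuous.measurable ((continuous_const.add ((continuous_sandwich _).fun_const_smul _)).sub
        continuous_const)
    · have hfe : (fun t : ↥ImH => t₀ + (ρ : ℝ) • sandwich (v : ℍ[ℝ]) t
            - (2 * Real.sqrt ρ) • imPart ((v : ℍ[ℝ]) * star x * star (u : ℍ[ℝ]) * x₀))
          = fun t : ↥ImH =>
            (t₀ - (2 * Real.sqrt ρ) • imPart ((v : ℍ[ℝ]) * star x * star (u : ℍ[ℝ]) * x₀))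
              + (ρ : ℝ) • (sandIso v) t := by
        funext t
        rw [add_sub_right_comm]
        rfl
      rw [hfe]
      have h := map_affine (sandIso v)
        (t₀ - (2 * Real.sqrt ρ) • imPart ((v : ℍ[ℝ]) * star x * star (u : ℍ[ℝ]) * x₀)) hρ
      rwa [finrank_ImH] at h
  -- the full fiber map for fixed `x`
  have hGmp : ∀ x : ℍ[ℝ], Measure.map
      (fun p : ↥ImH × W =>
        (t₀ + (ρ : ℝ) • sandwich (v : ℍ[ℝ]) p.1
            - (2 * Real.sqrt ρ) • imPart ((v : ℍ[ℝ]) * star x * star (u : ℍ[ℝ]) * x₀),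
         ((⟨(ρ : ℝ) * p.2.1, mul_pos hρ p.2.1.2⟩ : ℝ₊), sp1Mul u p.2.2.1, sp1Mul v p.2.2.2)))
      ((volume : Measure ↥ImH).prod ((rhoMeasure n).prod (sphereMeasure.prod sphereMeasure)))
      = (ENNReal.ofReal ((ρ : ℝ) ^ (-(n + 1))) * ENNReal.ofReal (((ρ : ℝ) ^ (3:ℕ))⁻¹)) •
          ((volume : Measure ↥ImH).prod
            ((rhoMeasure n).prod (sphereMeasure.prod sphereMeasure))) := by
    intro x
    have h := (hBmp x).prod hCmp
    refine h.map_eq.trans ?_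
    rw [prod_smul', smul_prod', smul_smul]
  -- the base map
  have hAmp : MeasurePreserving
      (fun x : ℍ[ℝ] => x₀ + Real.sqrt ρ • ((u : ℍ[ℝ]) * x * star (v : ℍ[ℝ])))
      (volume : Measure ℍ[ℝ]) (ENNReal.ofReal (((ρ : ℝ) ^ (2:ℕ))⁻¹) • volume) := by
    constructor
    · exact Continuous.measurable (by fun_prop)
    · have h := map_affine (qrot u v) x₀ hsq
      rw [Quaternion.finrank_eq_four, pow_sqrt_four hρ.le] at h
      exact h
  -- measurability of the uncurried fiber map
  have hGm : Measurable (Function.uncurry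
      (fun (x : ℍ[ℝ]) (p : ↥ImH × W) =>
        (t₀ + (ρ : ℝ) • sandwich (v : ℍ[ℝ]) p.1
            - (2 * Real.sqrt ρ) • imPart ((v : ℍ[ℝ]) * star x * star (u : ℍ[ℝ]) * x₀),
         ((⟨(ρ : ℝ) * p.2.1, mul_pos hρ p.2.1.2⟩ : ℝ₊), sp1Mul u p.2.2.1, sp1Mul v p.2.2.2)))) := by
    have hcont : Continuous (fun q : ℍ[ℝ] × (↥ImH × W) =>
        ((t₀ + (ρ : ℝ) • sandwich (v : ℍ[ℝ]) q.2.1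
            - (2 * Real.sqrt ρ) • imPart ((v : ℍ[ℝ]) * star q.1 * star (u : ℍ[ℝ]) * x₀),
          ((⟨(ρ : ℝ) * q.2.2.1, mul_pos hρ q.2.2.1.2⟩ : ℝ₊),
            sp1Mul u q.2.2.2.1, sp1Mul v q.2.2.2.2)) : ↥ImH × W)) := by
      refine Continuous.prodMk ?_ (Continuous.prodMk ?_ (Continuous.prodMk ?_ ?_))
      · refine (continuous_const.add ?_).sub ?_
        · exact ((continuous_sandwich _).comp (continuous_fst.comp continuous_snd)).fun_const_smul _
        · refine (continuous_imPart.comp ?_).fun_const_smul _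
          exact ((continuous_const.mul (continuous_starH.comp continuous_fst)).mul
            continuous_const).mul continuous_const
      · exact (continuous_const.mul (continuous_subtype_val.comp
          (continuous_fst.comp (continuous_snd.comp continuous_snd)))).subtype_mk _
      · exact (continuous_const.mul (continuous_subtype_val.comp (continuous_fst.comp
          (continuous_snd.comp (continuous_snd.comp continuous_snd))))).subtype_mk _
      · exact (continuous_const.mul (continuous_subtype_val.comp (continuous_snd.comp
          (continuous_snd.comp (continuous_snd.comp continuous_snd))))).subtype_mk _
    exact hcont.measurable
  have hskew := hAmp.skew_product hGm (MeasureTheory.ae_of_all _ hGmp)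
  have hmap := hskew.map_eq
  calc Measure.map (fun h => Pmul (x₀, t₀, ρ, u, v) h) (Mn n)
      = (ENNReal.ofReal (((ρ : ℝ) ^ (2:ℕ))⁻¹) • (volume : Measure ℍ[ℝ])).prod
          ((ENNReal.ofReal ((ρ : ℝ) ^ (-(n + 1))) * ENNReal.ofReal (((ρ : ℝ) ^ (3:ℕ))⁻¹)) •
            ((volume : Measure ↥ImH).prod
              ((rhoMeasure n).prod (sphereMeasure.prod sphereMeasure)))) := hmap
    _ = ENNReal.ofReal ((((x₀, t₀, ρ, u, v) : P).2.2.1 : ℝ) ^ (-(n + 6))) • Mn n := by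
        rw [prod_smul', smul_prod', smul_smul, scalar_combine hρ n]
        rfl

lemma map_right (g : P) (n : ℤ) :
    Measure.map (fun h => Pmul h g) (Mn n)
      = ENNReal.ofReal ((g.2.2.1 : ℝ) ^ (-(n + 1))) • Mn n := by
  obtain ⟨x₀, t₀, ρ₀, u₀, v₀⟩ := g
  have hρ : (0 : ℝ) < ρ₀ := ρ₀.2
  -- reordering equivalences
  have mpE : MeasurePreserving (fun h : P => (h.2.2, (h.1, h.2.1))) (Mn n)
      (((rhoMeasure n).prod (sphereMeasure.prod sphereMeasure)).prod
        ((volume : Measure ℍ[ℝ]).prod (volume : Measure ↥ImH))) := by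
    have e1 : MeasurePreserving
        (Prod.map (id : ℍ[ℝ] → ℍ[ℝ]) (Prod.swap : ↥ImH × W → W × ↥ImH))
        ((volume : Measure ℍ[ℝ]).prod ((volume : Measure ↥ImH).prod
          ((rhoMeasure n).prod (sphereMeasure.prod sphereMeasure))))
        ((volume : Measure ℍ[ℝ]).prod
          (((rhoMeasure n).prod (sphereMeasure.prod sphereMeasure)).prod
            (volume : Measure ↥ImH))) :=
      (MeasurePreserving.id _).prod Measure.measurePreserving_swap
    have e2 := (measurePreserving_prodAssoc (volume : Measure ℍ[ℝ])
      ((rhoMeasure n).prod (sphereMeasure.prod sphereMeasure))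
      (volume : Measure ↥ImH)).symm MeasurableEquiv.prodAssoc
    have e3 : MeasurePreserving
        (Prod.map (Prod.swap : ℍ[ℝ] × W → W × ℍ[ℝ]) (id : ↥ImH → ↥ImH))
        (((volume : Measure ℍ[ℝ]).prod
            ((rhoMeasure n).prod (sphereMeasure.prod sphereMeasure))).prod
          (volume : Measure ↥ImH))
        ((((rhoMeasure n).prod (sphereMeasure.prod sphereMeasure)).prod
            (volume : Measure ℍ[ℝ])).prod (volume : Measure ↥ImH)) :=
      Measure.measurePreserving_swap.prod (MeasurePreserving.id _)
    have e4 := measurePreserving_prodAssoc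
      ((rhoMeasure n).prod (sphereMeasure.prod sphereMeasure))
      (volume : Measure ℍ[ℝ]) (volume : Measure ↥ImH)
    exact ((e4.comp e3).comp e2).comp e1
  have mpEsymm : MeasurePreserving
      (fun p : W × (ℍ[ℝ] × ↥ImH) => (p.2.1, (p.2.2, p.1)))
      (((rhoMeasure n).prod (sphereMeasure.prod sphereMeasure)).prod
        ((volume : Measure ℍ[ℝ]).prod (volume : Measure ↥ImH))) (Mn n) := by
    have e1 := (measurePreserving_prodAssoc
      ((rhoMeasure n).prod (sphereMeasure.prod sphereMeasure))
      (volume : Measure ℍ[ℝ]) (volume : Measure ↥ImH)).symm MeasurableEquiv.prodAssoc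
    have e2 : MeasurePreserving
        (Prod.map (Prod.swap : W × ℍ[ℝ] → ℍ[ℝ] × W) (id : ↥ImH → ↥ImH))
        ((((rhoMeasure n).prod (sphereMeasure.prod sphereMeasure)).prod
            (volume : Measure ℍ[ℝ])).prod (volume : Measure ↥ImH))
        (((volume : Measure ℍ[ℝ]).prod
            ((rhoMeasure n).prod (sphereMeasure.prod sphereMeasure))).prod
          (volume : Measure ↥ImH)) :=
      Measure.measurePreserving_swap.prod (MeasurePreserving.id _)
    have e3 := measurePreserving_prodAssoc (volume : Measure ℍ[ℝ])
      ((rhoMeasure n).prod (sphereMeasure.prod sphereMeasure)) (volume : Measure ↥ImH)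
    have e4 : MeasurePreserving
        (Prod.map (id : ℍ[ℝ] → ℍ[ℝ]) (Prod.swap : W × ↥ImH → ↥ImH × W))
        ((volume : Measure ℍ[ℝ]).prod
          (((rhoMeasure n).prod (sphereMeasure.prod sphereMeasure)).prod
            (volume : Measure ↥ImH)))
        ((volume : Measure ℍ[ℝ]).prod ((volume : Measure ↥ImH).prod
          ((rhoMeasure n).prod (sphereMeasure.prod sphereMeasure)))) :=
      (MeasurePreserving.id _).prod Measure.measurePreserving_swap
    exact ((e4.comp e3).comp e2).comp e1
  -- the base map on `W`
  have hCmp : MeasurePreserving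
      (fun w : W => ((⟨(w.1 : ℝ) * (ρ₀ : ℝ), mul_pos w.1.2 hρ⟩ : ℝ₊),
        sp1Mul w.2.1 u₀, sp1Mul w.2.2 v₀))
      ((rhoMeasure n).prod (sphereMeasure.prod sphereMeasure))
      (ENNReal.ofReal ((ρ₀ : ℝ) ^ (-(n + 1))) •
        ((rhoMeasure n).prod (sphereMeasure.prod sphereMeasure))) := by
    have hfun : (fun r : ℝ₊ => (⟨(r : ℝ) * (ρ₀ : ℝ), mul_pos r.2 hρ⟩ : ℝ₊))
        = fun r : ℝ₊ => (⟨(ρ₀ : ℝ) * r, mul_pos hρ r.2⟩ : ℝ₊) := by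
      funext r
      exact Subtype.ext (mul_comm _ _)
    have h1 : MeasurePreserving (fun r : ℝ₊ => (⟨(r : ℝ) * (ρ₀ : ℝ), mul_pos r.2 hρ⟩ : ℝ₊))
        (rhoMeasure n) (ENNReal.ofReal ((ρ₀ : ℝ) ^ (-(n + 1))) • rhoMeasure n) := by
      constructor
      · exact (measurable_subtype_coe.mul measurable_const).subtype_mk
      · rw [hfun]
        exact rho_map n hρ
    have h2 := h1.prod ((sp1Mul_right_mp u₀).prod (sp1Mul_right_mp v₀))
    exact ⟨h2.measurable, h2.map_eq.trans (smul_prod' _ _ _)⟩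
  -- the fiber maps (translations) for fixed `w`
  have hInner : ∀ w : W, Measure.map
      (fun p : ℍ[ℝ] × ↥ImH =>
        (p.1 + Real.sqrt (w.1 : ℝ) • ((w.2.1 : ℍ[ℝ]) * x₀ * star (w.2.2 : ℍ[ℝ])),
         p.2 + (w.1 : ℝ) • sandwich (w.2.2 : ℍ[ℝ]) t₀
           - (2 * Real.sqrt (w.1 : ℝ)) •
              imPart ((w.2.2 : ℍ[ℝ]) * star x₀ * star (w.2.1 : ℍ[ℝ]) * p.1)))
      ((volume : Measure ℍ[ℝ]).prod (volume : Measure ↥ImH))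
      = (volume : Measure ℍ[ℝ]).prod (volume : Measure ↥ImH) := by
    intro w
    have hbase : MeasurePreserving
        (fun x : ℍ[ℝ] => x + Real.sqrt (w.1 : ℝ) • ((w.2.1 : ℍ[ℝ]) * x₀ * star (w.2.2 : ℍ[ℝ])))
        (volume : Measure ℍ[ℝ]) (volume : Measure ℍ[ℝ]) := by
      constructor
      · exact (continuous_id.add continuous_const).measurable
      · have hc : (fun x : ℍ[ℝ] => x + Real.sqrt (w.1 : ℝ) •
            ((w.2.1 : ℍ[ℝ]) * x₀ * star (w.2.2 : ℍ[ℝ])))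
            = fun x : ℍ[ℝ] => Real.sqrt (w.1 : ℝ) •
              ((w.2.1 : ℍ[ℝ]) * x₀ * star (w.2.2 : ℍ[ℝ])) + x :=
          funext fun x => add_comm _ _
        rw [hc]
        exact map_add_left_eq_self _ _
    have hfib : ∀ x : ℍ[ℝ], Measure.map
        (fun t : ↥ImH => t + (w.1 : ℝ) • sandwich (w.2.2 : ℍ[ℝ]) t₀
           - (2 * Real.sqrt (w.1 : ℝ)) •
              imPart ((w.2.2 : ℍ[ℝ]) * star x₀ * star (w.2.1 : ℍ[ℝ]) * x))
        (volume : Measure ↥ImH) = (volume : Measure ↥ImH) := by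
      intro x
      have hc : (fun t : ↥ImH => t + (w.1 : ℝ) • sandwich (w.2.2 : ℍ[ℝ]) t₀
           - (2 * Real.sqrt (w.1 : ℝ)) •
              imPart ((w.2.2 : ℍ[ℝ]) * star x₀ * star (w.2.1 : ℍ[ℝ]) * x))
          = fun t : ↥ImH => ((w.1 : ℝ) • sandwich (w.2.2 : ℍ[ℝ]) t₀
           - (2 * Real.sqrt (w.1 : ℝ)) •
              imPart ((w.2.2 : ℍ[ℝ]) * star x₀ * star (w.2.1 : ℍ[ℝ]) * x)) + t := by
        funext t
        abel
      rw [hc]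
      exact map_add_left_eq_self _ _
    have hgm : Measurable (Function.uncurry
        (fun (x : ℍ[ℝ]) (t : ↥ImH) => t + (w.1 : ℝ) • sandwich (w.2.2 : ℍ[ℝ]) t₀
           - (2 * Real.sqrt (w.1 : ℝ)) •
              imPart ((w.2.2 : ℍ[ℝ]) * star x₀ * star (w.2.1 : ℍ[ℝ]) * x))) := by
      have hcont : Continuous (fun q : ℍ[ℝ] × ↥ImH =>
          q.2 + (w.1 : ℝ) • sandwich (w.2.2 : ℍ[ℝ]) t₀
           - (2 * Real.sqrt (w.1 : ℝ)) •
              imPart ((w.2.2 : ℍ[ℝ]) * star x₀ * star (w.2.1 : ℍ[ℝ]) * q.1)) := by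
        refine (continuous_snd.add continuous_const).sub ?_
        refine Continuous.fun_const_smul (continuous_imPart.comp ?_) _
        exact continuous_const.mul continuous_fst
      exact hcont.measurable
    exact (hbase.skew_product hgm (MeasureTheory.ae_of_all _ hfib)).map_eq
  -- measurability of the uncurried fiber of the outer skew product
  have hGm : Measurable (Function.uncurry
      (fun (w : W) (p : ℍ[ℝ] × ↥ImH) =>
        (p.1 + Real.sqrt (w.1 : ℝ) • ((w.2.1 : ℍ[ℝ]) * x₀ * star (w.2.2 : ℍ[ℝ])),
         p.2 + (w.1 : ℝ) • sandwich (w.2.2 : ℍ[ℝ]) t₀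
           - (2 * Real.sqrt (w.1 : ℝ)) •
              imPart ((w.2.2 : ℍ[ℝ]) * star x₀ * star (w.2.1 : ℍ[ℝ]) * p.1)))) := by
    have hsqc : Continuous (fun q : W × (ℍ[ℝ] × ↥ImH) => Real.sqrt (q.1.1 : ℝ)) :=
      Real.continuous_sqrt.comp (continuous_subtype_val.comp (continuous_fst.comp continuous_fst))
    have hu : Continuous (fun q : W × (ℍ[ℝ] × ↥ImH) => (q.1.2.1 : ℍ[ℝ])) :=
      continuous_subtype_val.comp ((continuous_fst.comp continuous_snd).comp continuous_fst)
    have hv : Continuous (fun q : W × (ℍ[ℝ] × ↥ImH) => (q.1.2.2 : ℍ[ℝ])) :=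
      continuous_subtype_val.comp ((continuous_snd.comp continuous_snd).comp continuous_fst)
    have hcont : Continuous (fun q : W × (ℍ[ℝ] × ↥ImH) =>
        ((q.2.1 + Real.sqrt (q.1.1 : ℝ) • ((q.1.2.1 : ℍ[ℝ]) * x₀ * star (q.1.2.2 : ℍ[ℝ])),
          q.2.2 + (q.1.1 : ℝ) • sandwich (q.1.2.2 : ℍ[ℝ]) t₀
           - (2 * Real.sqrt (q.1.1 : ℝ)) •
              imPart ((q.1.2.2 : ℍ[ℝ]) * star x₀ * star (q.1.2.1 : ℍ[ℝ]) * q.2.1))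
          : ℍ[ℝ] × ↥ImH)) := by
      refine Continuous.prodMk ?_ ?_
      · refine (continuous_fst.comp continuous_snd).add ?_
        exact Continuous.smul hsqc ((hu.mul continuous_const).mul (continuous_starH.comp hv))
      · refine ((continuous_snd.comp continuous_snd).add ?_).sub ?_
        · refine Continuous.smul (continuous_subtype_val.comp
            (continuous_fst.comp continuous_fst)) ?_
          refine Continuous.subtype_mk ?_ _
          exact (hv.mul continuous_const).mul (continuous_starH.comp hv)
        · refine Continuous.smul (continuous_const.mul hsqc) ?_
          refine continuous_imPart.comp ?_
          exact ((hv.mul continuous_const).mul (continuous_starH.comp hu)).mul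
            (continuous_fst.comp continuous_snd)
    exact hcont.measurable
  have hskew := hCmp.skew_product hGm (MeasureTheory.ae_of_all _ hInner)
  have hfun : (fun h : P => Pmul h (x₀, t₀, ρ₀, u₀, v₀))
      = (fun p : W × (ℍ[ℝ] × ↥ImH) => (p.2.1, (p.2.2, p.1)))
        ∘ ((fun q : W × (ℍ[ℝ] × ↥ImH) =>
            (((⟨(q.1.1 : ℝ) * (ρ₀ : ℝ), mul_pos q.1.1.2 hρ⟩ : ℝ₊),
              sp1Mul q.1.2.1 u₀, sp1Mul q.1.2.2 v₀),
             (q.2.1 + Real.sqrt (q.1.1 : ℝ) • ((q.1.2.1 : ℍ[ℝ]) * x₀ * star (q.1.2.2 : ℍ[ℝ])),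
              q.2.2 + (q.1.1 : ℝ) • sandwich (q.1.2.2 : ℍ[ℝ]) t₀
                - (2 * Real.sqrt (q.1.1 : ℝ)) •
                  imPart ((q.1.2.2 : ℍ[ℝ]) * star x₀ * star (q.1.2.1 : ℍ[ℝ]) * q.2.1))))
          ∘ (fun h : P => (h.2.2, (h.1, h.2.1)))) := rfl
  rw [hfun, ← Measure.map_map mpEsymm.measurable (hskew.measurable.comp mpE.measurable),
    ← Measure.map_map hskew.measurable mpE.measurable, mpE.map_eq, hskew.map_eq,
    smul_prod', Measure.map_smul, mpEsymm.map_eq]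

lemma zpow_bounds (n : ℤ) : ∃ C c : ℝ, 0 < c ∧ 0 < C ∧
    ∀ r : ℝ, r ∈ Ioo (1:ℝ) 2 → c ≤ r ^ n ∧ r ^ n ≤ C := by
  rcases n with m | m
  · refine ⟨2 ^ m, 1, one_pos, by positivity, fun r hr => ?_⟩
    simp only [Int.ofNat_eq_coe, zpow_natCast]
    constructor
    · calc (1:ℝ) = 1 ^ m := (one_pow m).symm
        _ ≤ r ^ m := pow_le_pow_left₀ (by norm_num) hr.1.le m
    · exact pow_le_pow_left₀ (by linarith [hr.1]) hr.2.le m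
  · refine ⟨1, ((2:ℝ) ^ (m+1))⁻¹, by positivity, one_pos, fun r hr => ?_⟩
    have hr0 : (0:ℝ) < r := by linarith [hr.1]
    have h1 : (1:ℝ) ≤ r ^ (m+1) := by
      simpa using pow_le_pow_left₀ (by norm_num : (0:ℝ) ≤ 1) hr.1.le (m+1)
    have h2 : r ^ (m+1) ≤ 2 ^ (m+1) := pow_le_pow_left₀ hr0.le hr.2.le (m+1)
    rw [zpow_negSucc]
    constructor
    · exact inv_anti₀ (by positivity) h2
    · calc (r ^ (m+1))⁻¹ ≤ 1⁻¹ := inv_anti₀ one_pos h1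
        _ = 1 := inv_one

lemma rho_Ioo (n : ℤ) :
    rhoMeasure n ((Subtype.val : ℝ₊ → ℝ) ⁻¹' Ioo 1 2) ≠ 0 ∧
    rhoMeasure n ((Subtype.val : ℝ₊ → ℝ) ⁻¹' Ioo 1 2) ≠ ⊤ := by
  obtain ⟨C, c, hc, hC, hbound⟩ := zpow_bounds n
  have hIm : MeasurableSet ((Subtype.val : ℝ₊ → ℝ) ⁻¹' Ioo 1 2) :=
    measurable_subtype_coe measurableSet_Ioo
  have hν : ((volume : Measure ℝ).comap (Subtype.val : ℝ₊ → ℝ))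
      ((Subtype.val : ℝ₊ → ℝ) ⁻¹' Ioo 1 2) = 1 := by
    rw [hembR.comap_apply, Set.image_preimage_eq_inter_range, Subtype.range_coe_subtype]
    have h2 : Ioo (1:ℝ) 2 ∩ {x : ℝ | 0 < x} = Ioo 1 2 :=
      inter_eq_left.mpr (fun x hx => lt_trans one_pos hx.1)
    rw [h2, Real.volume_Ioo]
    norm_num
  have happ : rhoMeasure n ((Subtype.val : ℝ₊ → ℝ) ⁻¹' Ioo 1 2)
      = ∫⁻ r in (Subtype.val : ℝ₊ → ℝ) ⁻¹' Ioo 1 2, ENNReal.ofReal ((r : ℝ) ^ n)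
          ∂((volume : Measure ℝ).comap (Subtype.val : ℝ₊ → ℝ)) :=
    withDensity_apply _ hIm
  have hge : ENNReal.ofReal c ≤ rhoMeasure n ((Subtype.val : ℝ₊ → ℝ) ⁻¹' Ioo 1 2) := by
    rw [happ]
    have h1 : ∫⁻ _ in (Subtype.val : ℝ₊ → ℝ) ⁻¹' Ioo 1 2, ENNReal.ofReal c
          ∂((volume : Measure ℝ).comap (Subtype.val : ℝ₊ → ℝ))
        ≤ ∫⁻ r in (Subtype.val : ℝ₊ → ℝ) ⁻¹' Ioo 1 2, ENNReal.ofReal ((r : ℝ) ^ n)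
          ∂((volume : Measure ℝ).comap (Subtype.val : ℝ₊ → ℝ)) := by
      refine lintegral_mono_ae ?_
      filter_upwards [ae_restrict_mem hIm] with r hr
      exact ENNReal.ofReal_le_ofReal (hbound _ hr).1
    rwa [setLIntegral_const, hν, mul_one] at h1
  have hle : rhoMeasure n ((Subtype.val : ℝ₊ → ℝ) ⁻¹' Ioo 1 2) ≤ ENNReal.ofReal C := by
    rw [happ]
    have h1 : ∫⁻ r in (Subtype.val : ℝ₊ → ℝ) ⁻¹' Ioo 1 2, ENNReal.ofReal ((r : ℝ) ^ n)
          ∂((volume : Measure ℝ).comap (Subtype.val : ℝ₊ → ℝ))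
        ≤ ∫⁻ _ in (Subtype.val : ℝ₊ → ℝ) ⁻¹' Ioo 1 2, ENNReal.ofReal C
          ∂((volume : Measure ℝ).comap (Subtype.val : ℝ₊ → ℝ)) := by
      refine lintegral_mono_ae ?_
      filter_upwards [ae_restrict_mem hIm] with r hr
      exact ENNReal.ofReal_le_ofReal (hbound _ hr).2
    rwa [setLIntegral_const, hν, mul_one] at h1
  exact ⟨(lt_of_lt_of_le (ENNReal.ofReal_pos.mpr hc) hge).ne',
    (lt_of_le_of_lt hle ENNReal.ofReal_lt_top).ne⟩

/-- a box with finite positive measure for every `Mn n`. -/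
def box : Set P :=
  Metric.ball (0:ℍ[ℝ]) 1 ×ˢ (Metric.ball (0:↥ImH) 1 ×ˢ
    (((Subtype.val : ℝ₊ → ℝ) ⁻¹' Ioo 1 2) ×ˢ ((univ : Set Sp1) ×ˢ (univ : Set Sp1))))

lemma Mn_box (n : ℤ) : Mn n box ≠ 0 ∧ Mn n box ≠ ⊤ := by
  obtain ⟨h0, ht⟩ := rho_Ioo n
  have hval : Mn n box
      = volume (Metric.ball (0:ℍ[ℝ]) 1) * (volume (Metric.ball (0:↥ImH) 1) *
        (rhoMeasure n ((Subtype.val : ℝ₊ → ℝ) ⁻¹' Ioo 1 2) *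
          (sphereMeasure univ * sphereMeasure univ))) := by
    unfold Mn box
    rw [Measure.prod_prod, Measure.prod_prod, Measure.prod_prod, Measure.prod_prod]
  rw [hval, sphereMeasure_univ, mul_one, mul_one]
  constructor
  · exact mul_ne_zero (Metric.measure_ball_pos _ _ one_pos).ne'
      (mul_ne_zero (Metric.measure_ball_pos _ _ one_pos).ne' h0)
  · exact ENNReal.mul_ne_top measure_ball_lt_top.ne
      (ENNReal.mul_ne_top measure_ball_lt_top.ne ht)

end Statement3Aux



/-- `dm_l` is left-invariant, `dm_r` is right-invariant, and the two are
not proportional, so `𝐏` is non-unimodular. -/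
theorem statement3 :
    (∀ g : P, Measure.map (fun h => Pmul g h) ml = ml) ∧
    (∀ g : P, Measure.map (fun h => Pmul h g) mr = mr) ∧
    ¬ ∃ c : ENNReal, ml = c • mr := by
  classical
  have part1 : ∀ g : P, Measure.map (fun h => Pmul g h) ml = ml := by
    intro g
    have h := Statement3Aux.map_left g (-6)
    rw [show (-((-6:ℤ) + 6)) = 0 by norm_num, zpow_zero, ENNReal.ofReal_one, one_smul] at h
    exact h
  have part2 : ∀ g : P, Measure.map (fun h => Pmul h g) mr = mr := by
    intro g
    have h := Statement3Aux.map_right g (-1)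
    rw [show (-((-1:ℤ) + 1)) = 0 by norm_num, zpow_zero, ENNReal.ofReal_one, one_smul] at h
    exact h
  refine ⟨part1, part2, ?_⟩
  rintro ⟨c, hc⟩
  obtain ⟨hml0, hmlt⟩ := Statement3Aux.Mn_box (-6)
  obtain ⟨hmr0, hmrt⟩ := Statement3Aux.Mn_box (-1)
  have hmlS : ml Statement3Aux.box ≠ 0 := hml0
  have hmlT : ml Statement3Aux.box ≠ ⊤ := hmlt
  have hmrS : mr Statement3Aux.box ≠ 0 := hmr0
  have hmrT : mr Statement3Aux.box ≠ ⊤ := hmrt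
  have hcS : ml Statement3Aux.box = c * mr Statement3Aux.box := by
    rw [hc, Measure.smul_apply, smul_eq_mul]
  have hc0 : c ≠ 0 := by
    rintro rfl
    rw [zero_mul] at hcS
    exact hmlS hcS
  have hctop : c ≠ ⊤ := by
    rintro rfl
    rw [ENNReal.top_mul hmrS] at hcS
    exact hmlT hcS
  set gd : P := ((0:ℍ[ℝ]), (0:↥ImH), (⟨2, two_pos⟩ : {r : ℝ // 0 < r}), sp1One, sp1One) with hgd
  have h2 : Measure.map (fun h => Pmul gd h) mr
      = ENNReal.ofReal ((2:ℝ) ^ ((-5):ℤ)) • mr := by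
    have h := Statement3Aux.map_left gd (-1)
    rw [show (-((-1:ℤ) + 6)) = -5 by norm_num] at h
    exact h
  have h1 : Measure.map (fun h => Pmul gd h) ml = ml := part1 gd
  rw [hc, Measure.map_smul, h2] at h1
  have h3 := congrArg (fun μ : Measure P => μ Statement3Aux.box) h1
  simp only [Measure.smul_apply, smul_eq_mul] at h3
  have h4 : ENNReal.ofReal ((2:ℝ) ^ ((-5):ℤ)) * mr Statement3Aux.box
      = mr Statement3Aux.box :=
    (ENNReal.mul_right_inj hc0 hctop).mp h3
  have h5 : ENNReal.ofReal ((2:ℝ) ^ ((-5):ℤ)) = 1 :=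
    (ENNReal.mul_eq_right hmrS hmrT).mp h4
  have h6 : ENNReal.ofReal ((2:ℝ) ^ ((-5):ℤ)) < 1 := by
    refine ENNReal.ofReal_lt_one.mpr ?_
    rw [show ((-5):ℤ) = -(5:ℕ) by norm_num, zpow_neg, zpow_natCast]
    norm_num
  exact h6.ne h5

end
end

section
/- For f in the Schwartz space 𝒮(𝒬), the partial Fourier transform of the Radon transform of f satisfies ℱ₂(ℛf)(x,a) = ℱf(−2xa, a) for all x ∈ ℍ and a ∈ Im ℍ, where −2xa is the quaternion product of −2x and a. -/
noncomputable section

open MeasureTheory Quaternion Complex RealInnerProductSpace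

set_option maxHeartbeats 2000000 in
set_option synthInstance.maxHeartbeats 2000000 in
instance QH.isAddHaar : (volume : Measure QH).IsAddHaarMeasure :=
  MeasureTheory.Measure.prod.instIsAddHaarMeasure volume volume

set_option maxHeartbeats 2000000 in
set_option synthInstance.maxHeartbeats 2000000 in
instance QH.isAddHaar' :
    ((volume : Measure ℍ[ℝ]).prod (volume : Measure ↥ImH)).IsAddHaarMeasure :=
  MeasureTheory.Measure.prod.instIsAddHaarMeasure volume volume

set_option maxHeartbeats 2000000
set_option synthInstance.maxHeartbeats 2000000

lemma continuous_imPart : Continuous imPart :=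
  Continuous.subtype_mk Quaternion.continuous_im _

lemma key_inner (x y : ℍ[ℝ]) (a : ↥ImH) :
    (⟪y, (-2 : ℝ) • (x * (a : ℍ[ℝ]))⟫ : ℝ) =
      (⟪((2 : ℝ) • imPart (star y * x) : ↥ImH), a⟫ : ℝ) := by
  have ha : (a : ℍ[ℝ]).re = 0 := a.2
  show (⟪y, (-2 : ℝ) • (x * (a : ℍ[ℝ]))⟫ : ℝ) = ⟪(2 : ℝ) • (star y * x).im, (a : ℍ[ℝ])⟫
  simp only [Quaternion.inner_def, Quaternion.re_smul, Quaternion.re_mul, Quaternion.re_star,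
    Quaternion.imI_star, Quaternion.imJ_star, Quaternion.imK_star, Quaternion.imI_smul,
    Quaternion.imJ_smul, Quaternion.imK_smul, Quaternion.imI_mul, Quaternion.imJ_mul,
    Quaternion.imK_mul, Quaternion.re_im, Quaternion.imI_im, Quaternion.imJ_im,
    Quaternion.imK_im, ha, smul_eq_mul]
  ring

/-- For `f ∈ 𝒮(𝒬)`, `ℱ₂(ℛf)(x,a) = ℱf(−2xa, a)`. -/
theorem statement6 (f : SchwartzMap QH ℂ) (x : ℍ[ℝ]) (a : ↥ImH) :
    F2 (Radon ⇑f) (x, a) = FF ⇑f ((-2 : ℝ) • (x * (a : ℍ[ℝ])), a) := by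
  classical
  set p : ℍ[ℝ] := (-2 : ℝ) • (x * (a : ℍ[ℝ])) with hp
  set c : ℍ[ℝ] → ↥ImH := fun y => (2 : ℝ) • imPart (star y * x) with hc
  have hccont : Continuous c := by
    exact (continuous_imPart.comp ((continuous_star).mul continuous_const)).const_smul (2 : ℝ)
  set e2 : ↥ImH → ℂ := fun t => Complex.exp (Complex.I * ((⟪t, a⟫ : ℝ) : ℂ)) with he2
  set e1 : ℍ[ℝ] → ℂ := fun y => Complex.exp (Complex.I * ((⟪y, p⟫ : ℝ) : ℂ)) with he1
  have he2norm : ∀ t, ‖e2 t‖ = 1 := fun t => by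
    simp only [he2]; rw [mul_comm]; exact Complex.norm_exp_ofReal_mul_I _
  have he1norm : ∀ y, ‖e1 y‖ = 1 := fun y => by
    simp only [he1]; rw [mul_comm]; exact Complex.norm_exp_ofReal_mul_I _
  set G : QH → ℂ := fun z => f z * e1 z.1 * e2 z.2 with hG
  set G' : QH → ℂ := fun z => f (z.1, z.2 - c z.1) * e2 z.2 with hG'
  have he2cont : Continuous e2 := by
    apply Complex.continuous_exp.comp
    exact continuous_const.mul (Complex.continuous_ofReal.comp
      (Continuous.inner continuous_id continuous_const))
  have he1cont : Continuous e1 := by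
    apply Complex.continuous_exp.comp
    exact continuous_const.mul (Complex.continuous_ofReal.comp
      (Continuous.inner continuous_id continuous_const))
  have hGcont : Continuous G :=
    (f.continuous.mul (he1cont.comp continuous_fst)).mul (he2cont.comp continuous_snd)
  have hG'cont : Continuous G' := by
    refine Continuous.mul ?_ (he2cont.comp continuous_snd)
    exact f.continuous.comp
      (continuous_fst.prodMk (continuous_snd.sub (hccont.comp continuous_fst)))
  have hfint : Integrable (⇑f) ((volume : Measure ℍ[ℝ]).prod (volume : Measure ↥ImH)) :=
    f.integrable
  have hsec := (integrable_prod_iff f.continuous.aestronglyMeasurable).1 hfint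
  have hfnormint : Integrable (fun z : QH => ‖f z‖)
      ((volume : Measure ℍ[ℝ]).prod (volume : Measure ↥ImH)) := hfint.norm
  have hsecnorm := (integrable_prod_iff hfnormint.1).1 hfnormint
  simp only [norm_norm] at hsecnorm
  have hGint : Integrable G ((volume : Measure ℍ[ℝ]).prod (volume : Measure ↥ImH)) := by
    refine hfint.norm.mono' hGcont.aestronglyMeasurable (Filter.Eventually.of_forall fun z => ?_)
    rw [hG]
    simp only [norm_mul, he1norm, he2norm, mul_one, le_refl]
  have hG'int : Integrable G' ((volume : Measure ℍ[ℝ]).prod (volume : Measure ↥ImH)) := by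
    rw [integrable_prod_iff hG'cont.aestronglyMeasurable]
    constructor
    · filter_upwards [hsec.1] with y hy
      have h2 : Integrable (fun t : ↥ImH =>
          f (y, t) * Complex.exp (Complex.I * ((⟪t + c y, a⟫ : ℝ) : ℂ))) volume := by
        refine hy.norm.mono' ?_ (Filter.Eventually.of_forall fun t => ?_)
        · apply Continuous.aestronglyMeasurable
          refine Continuous.mul ?_ ?_
          · exact f.continuous.comp (continuous_const.prodMk continuous_id)
          · exact Complex.continuous_exp.comp (continuous_const.mul
              (Complex.continuous_ofReal.comp
                (Continuous.inner (continuous_id.add continuous_const) continuous_const)))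
        · rw [norm_mul, mul_comm Complex.I, Complex.norm_exp_ofReal_mul_I, mul_one]
      have h3 := h2.comp_sub_right (c y)
      simp only [sub_add_cancel] at h3
      exact h3
    · have heq : (fun y => ∫ t, ‖G' (y, t)‖) = fun y => ∫ t, ‖f (y, t)‖ := by
        funext y
        have h1 : (fun t : ↥ImH => ‖G' (y, t)‖) = fun t => ‖f (y, t - c y)‖ := by
          funext t
          rw [hG']
          simp only [norm_mul, he2norm, mul_one]
        rw [h1]
        exact integral_sub_right_eq_self (fun t : ↥ImH => ‖f (y, t)‖) (c y)
      rw [heq]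
      exact hsecnorm.2
  have step1 : F2 (Radon ⇑f) (x, a) = ∫ t : ↥ImH, ∫ y : ℍ[ℝ], G' (y, t) := by
    rw [F2]
    refine integral_congr_ae (Filter.Eventually.of_forall fun t => ?_)
    have h0 : (∫ y : ℍ[ℝ], G' (y, t)) =
        (∫ y : ℍ[ℝ], f (y, t - c y)) * Complex.exp (Complex.I * ((⟪t, a⟫ : ℝ) : ℂ)) := by
      rw [← integral_mul_const]
    beta_reduce
    rw [h0]
    rfl
  have step2 : (∫ t : ↥ImH, ∫ y : ℍ[ℝ], G' (y, t)) = ∫ y : ℍ[ℝ], ∫ t : ↥ImH, G' (y, t) := by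
    rw [← integral_prod_symm G' hG'int, integral_prod G' hG'int]
  have step3 : ∀ y : ℍ[ℝ], (∫ t : ↥ImH, G' (y, t)) =
      (∫ t : ↥ImH, f (y, t) * e2 t) * Complex.exp (Complex.I * ((⟪c y, a⟫ : ℝ) : ℂ)) := by
    intro y
    have htr := integral_sub_right_eq_self (μ := (volume : Measure ↥ImH))
      (fun t : ↥ImH => f (y, t) * Complex.exp (Complex.I * ((⟪t + c y, a⟫ : ℝ) : ℂ))) (c y)
    simp only [sub_add_cancel] at htr
    rw [show (∫ t : ↥ImH, G' (y, t)) =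
        ∫ t : ↥ImH, f (y, t) * Complex.exp (Complex.I * ((⟪t + c y, a⟫ : ℝ) : ℂ)) from htr]
    have hsplit : ∀ t : ↥ImH,
        f (y, t) * Complex.exp (Complex.I * ((⟪t + c y, a⟫ : ℝ) : ℂ)) =
          (f (y, t) * e2 t) * Complex.exp (Complex.I * ((⟪c y, a⟫ : ℝ) : ℂ)) := by
      intro t
      rw [he2]
      rw [inner_add_left, Complex.ofReal_add, mul_add, Complex.exp_add]
      ring
    rw [integral_congr_ae (Filter.Eventually.of_forall hsplit)]
    exact integral_mul_const _ _
  have step4 : (∫ y : ℍ[ℝ], ∫ t : ↥ImH, G' (y, t)) = ∫ y : ℍ[ℝ], ∫ t : ↥ImH, G (y, t) := by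
    refine integral_congr_ae (Filter.Eventually.of_forall fun y => ?_)
    show (∫ t : ↥ImH, G' (y, t)) = ∫ t : ↥ImH, G (y, t)
    have he1key : e1 y = Complex.exp (Complex.I * ((⟪c y, a⟫ : ℝ) : ℂ)) := by
      simp only [he1, hp, hc]
      rw [key_inner x y a]
    rw [step3 y]
    have hGy : (∫ t : ↥ImH, G (y, t)) = (∫ t : ↥ImH, f (y, t) * e2 t) * e1 y := by
      rw [← integral_mul_const]
      refine integral_congr_ae (Filter.Eventually.of_forall fun t => ?_)
      rw [hG]; ring
    rw [hGy, he1key]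
  have step5 : (∫ y : ℍ[ℝ], ∫ t : ↥ImH, G (y, t)) = FF ⇑f (p, a) := by
    rw [FF, ← integral_prod G hGint]
    rfl
  rw [step1, step2, step4, step5]

end
end
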